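/- arXiv:2207.09125 — 2 statements merged into one kernel-verified Lean document; each statement's English description precedes it below -/
import Mathlib

section
/- Let s, q ∈ ℍ with s ∉ [q]. Then for each i = 1, 2, 3 the partial derivative of the left slice hyperholomorphic Cauchy kernel along the direction e_i satisfies: ∂_{q_i} S_L^{-1}(s,q) = e_i Q_{c,s}(q)^{-1} + (q_i/2) F_L(s,q), where q_i is the i-th imaginary component of q. -/
noncomputable section

open scoped Quaternion
open Finset

/-- The imaginary units `e₁, e₂, e₃` of the quaternions `ℍ = ℍ[ℝ]`. -/
def e1 : ℍ[ℝ] := ⟨0, 1, 0, 0⟩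
def e2 : ℍ[ℝ] := ⟨0, 0, 1, 0⟩
def e3 : ℍ[ℝ] := ⟨0, 0, 0, 1⟩

/-- The (left) Fueter operator `Df = ∂_{q₀}f + e₁∂_{q₁}f + e₂∂_{q₂}f + e₃∂_{q₃}f`,
where the partial derivatives are the directional derivatives along `1, e₁, e₂, e₃`. -/
def Dop (f : ℍ[ℝ] → ℍ[ℝ]) (q : ℍ[ℝ]) : ℍ[ℝ] :=
  fderiv ℝ f q 1 + e1 * fderiv ℝ f q e1 + e2 * fderiv ℝ f q e2 + e3 * fderiv ℝ f q e3

/-- The (left) conjugate Fueter operator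
`D̄f = ∂_{q₀}f − e₁∂_{q₁}f − e₂∂_{q₂}f − e₃∂_{q₃}f`. -/
def Dbar (f : ℍ[ℝ] → ℍ[ℝ]) (q : ℍ[ℝ]) : ℍ[ℝ] :=
  fderiv ℝ f q 1 - e1 * fderiv ℝ f q e1 - e2 * fderiv ℝ f q e2 - e3 * fderiv ℝ f q e3

/-- The right Fueter operator `fD = ∂_{q₀}f + (∂_{q₁}f)e₁ + (∂_{q₂}f)e₂ + (∂_{q₃}f)e₃`. -/
def DopR (f : ℍ[ℝ] → ℍ[ℝ]) (q : ℍ[ℝ]) : ℍ[ℝ] :=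
  fderiv ℝ f q 1 + fderiv ℝ f q e1 * e1 + fderiv ℝ f q e2 * e2 + fderiv ℝ f q e3 * e3

/-- The right conjugate Fueter operator
`fD̄ = ∂_{q₀}f − (∂_{q₁}f)e₁ − (∂_{q₂}f)e₂ − (∂_{q₃}f)e₃`. -/
def DbarR (f : ℍ[ℝ] → ℍ[ℝ]) (q : ℍ[ℝ]) : ℍ[ℝ] :=
  fderiv ℝ f q 1 - fderiv ℝ f q e1 * e1 - fderiv ℝ f q e2 * e2 - fderiv ℝ f q e3 * e3

/-- The Laplacian in the four real variables `q₀, q₁, q₂, q₃`. -/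
def Lap (f : ℍ[ℝ] → ℍ[ℝ]) (q : ℍ[ℝ]) : ℍ[ℝ] :=
  fderiv ℝ (fun p => fderiv ℝ f p 1) q 1 + fderiv ℝ (fun p => fderiv ℝ f p e1) q e1 +
    fderiv ℝ (fun p => fderiv ℝ f p e2) q e2 + fderiv ℝ (fun p => fderiv ℝ f p e3) q e3

/-- `s ∈ [q]`: membership in the 2-sphere
`[q] = {p : Re(p) = Re(q), |Im(p)| = |Im(q)|}` of `q`. -/
def inSphereOf (s q : ℍ[ℝ]) : Prop := s.re = q.re ∧ ‖s.im‖ = ‖q.im‖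

/-- `Q_{c,s}(q) = s² − 2 Re(q) s + |q|²`. -/
def Qc (s q : ℍ[ℝ]) : ℍ[ℝ] := s ^ 2 - 2 * (q.re : ℍ[ℝ]) * s + ((‖q‖ ^ 2 : ℝ) : ℍ[ℝ])

/-- The left slice hyperholomorphic Cauchy kernel `S_L^{-1}(s,q) = (s − q̄) Q_{c,s}(q)⁻¹`. -/
def SL (s q : ℍ[ℝ]) : ℍ[ℝ] := (s - star q) * (Qc s q)⁻¹

/-- The right slice hyperholomorphic Cauchy kernel `S_R^{-1}(s,q) = Q_{c,s}(q)⁻¹ (s − q̄)`. -/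
def SR (s q : ℍ[ℝ]) : ℍ[ℝ] := (Qc s q)⁻¹ * (s - star q)

/-- The left `F`-kernel `F_L(s,q) = −4 (s − q̄) Q_{c,s}(q)^{-2}`. -/
def FL (s q : ℍ[ℝ]) : ℍ[ℝ] := -4 * (s - star q) * ((Qc s q)⁻¹) ^ 2

/-- The right `F`-kernel `F_R(s,q) = −4 Q_{c,s}(q)^{-2} (s − q̄)`. -/
def FR (s q : ℍ[ℝ]) : ℍ[ℝ] := -4 * ((Qc s q)⁻¹) ^ 2 * (s - star q)

/-- The Clifford–Appell polynomials
`Q_ℓ(q,q̄) = (2/((ℓ+1)(ℓ+2))) Σ_{j=0}^{ℓ} (ℓ−j+1) q^{ℓ−j} q̄^j`. -/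
def QA (ℓ : ℕ) (q : ℍ[ℝ]) : ℍ[ℝ] :=
  ((2 : ℝ) / ((ℓ + 1) * (ℓ + 2))) •
    ∑ j ∈ Finset.range (ℓ + 1), ((ℓ - j + 1 : ℕ) : ℍ[ℝ]) * q ^ (ℓ - j) * (star q) ^ j


/-! ### Auxiliary lemmas -/

instance : StarModule ℝ ℍ[ℝ] := ⟨fun r x => by ext <;> simp⟩

lemma norm_sq_q (q : ℍ[ℝ]) : (‖q‖^2 : ℝ) = q.re^2 + q.imI^2 + q.imJ^2 + q.imK^2 := by
  rw [sq, ← Quaternion.normSq_eq_norm_mul_self, Quaternion.normSq_def']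

lemma norm_im_sq (x : ℍ[ℝ]) : ‖x.im‖^2 = x.imI^2 + x.imJ^2 + x.imK^2 := by
  rw [norm_sq_q]; simp [QuaternionAlgebra.im]

lemma Qc_ne_zero {s q : ℍ[ℝ]} (h : ¬ inSphereOf s q) : Qc s q ≠ 0 := by
  intro h0
  apply h
  rw [Qc, show (2 : ℍ[ℝ]) * (q.re : ℍ[ℝ]) = ((2 * q.re : ℝ) : ℍ[ℝ]) from by
    rw [Quaternion.coe_mul, show ((2:ℝ):ℍ[ℝ]) = (2:ℍ[ℝ]) from by norm_cast]] at h0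
  have hre := congrArg QuaternionAlgebra.re h0
  have hI := congrArg QuaternionAlgebra.imI h0
  have hJ := congrArg QuaternionAlgebra.imJ h0
  have hK := congrArg QuaternionAlgebra.imK h0
  simp only [sq, Quaternion.re_add, Quaternion.re_sub,
    Quaternion.re_mul, Quaternion.imI_add, Quaternion.imI_sub, Quaternion.imI_mul,
    Quaternion.imJ_add, Quaternion.imJ_sub, Quaternion.imJ_mul,
    Quaternion.imK_add, Quaternion.imK_sub, Quaternion.imK_mul,
    Quaternion.re_coe, Quaternion.imI_coe, Quaternion.imJ_coe, Quaternion.imK_coe,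
    Quaternion.re_zero, Quaternion.imI_zero, Quaternion.imJ_zero,
    Quaternion.imK_zero] at hre hI hJ hK
  have hQn := norm_sq_q q
  rcases eq_or_ne s.re q.re with hre' | hre'
  · refine ⟨hre', ?_⟩
    have hsq : ‖s.im‖^2 = ‖q.im‖^2 := by
      rw [norm_im_sq, norm_im_sq]
      nlinarith [hre, hQn, hre']
    calc ‖s.im‖ = Real.sqrt (‖s.im‖^2) := (Real.sqrt_sq (norm_nonneg _)).symm
    _ = Real.sqrt (‖q.im‖^2) := by rw [hsq]
    _ = ‖q.im‖ := Real.sqrt_sq (norm_nonneg _)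
  · exfalso
    have d := sub_ne_zero.mpr hre'
    have hI0 : s.imI = 0 := by
      have h1 : s.imI * (s.re - q.re) = 0 := by linear_combination hI / 2
      rcases mul_eq_zero.mp h1 with h | h; exact h; exact absurd h d
    have hJ0 : s.imJ = 0 := by
      have h1 : s.imJ * (s.re - q.re) = 0 := by linear_combination hJ / 2
      rcases mul_eq_zero.mp h1 with h | h; exact h; exact absurd h d
    have hK0 : s.imK = 0 := by
      have h1 : s.imK * (s.re - q.re) = 0 := by linear_combination hK / 2
      rcases mul_eq_zero.mp h1 with h | h; exact h; exact absurd h d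
    have hz : (s.re - q.re)^2 + (q.imI^2 + q.imJ^2 + q.imK^2) = 0 := by
      nlinarith [hre, hQn]
    have h2 : (s.re - q.re)^2 > 0 := by positivity
    nlinarith [sq_nonneg q.imI, sq_nonneg q.imJ, sq_nonneg q.imK]

lemma Qc_eq (s : ℍ[ℝ]) :
    (fun p : ℍ[ℝ] => Qc s p) = fun p => s^2 - (p + star p) * s + p * star p := by
  funext p
  rw [Qc, Quaternion.self_add_star, Quaternion.self_mul_star, sq (‖p‖),
    ← Quaternion.normSq_eq_norm_mul_self]

lemma key (s q : ℍ[ℝ]) (hQ : Qc s q ≠ 0) (v : ℍ[ℝ]) (hv : star v = -v) (r : ℝ)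
    (hvr : v * star q - q * v = ((2*r : ℝ) : ℍ[ℝ])) :
    fderiv ℝ (fun p => SL s p) q v = v * (Qc s q)⁻¹ + (r/2) • FL s q := by
  have hid := hasFDerivAt_id (𝕜 := ℝ) q
  have hs := hid.star
  have hA := hs.const_sub s
  have hsum := hid.add hs
  have hmul1 := hsum.mul' (hasFDerivAt_const (𝕜 := ℝ) s q)
  have hg := (hmul1.const_sub (s^2)).add (hid.mul' hs)
  replace hg := hg.congr_of_eventuallyEq (f₁ := fun p => Qc s p)
    (Filter.Eventually.of_forall fun p => (congrFun (Qc_eq s) p).trans rfl)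
  have hinv := (hasFDerivAt_inv' (𝕜 := ℝ) hQ).comp q hg
  have hf := hA.mul' hinv
  have heq : (fun p : ℍ[ℝ] => SL s p) = fun y => (s - star (id y)) * (Inv.inv ∘ Qc s) y := by
    funext p; simp [SL, Function.comp]
  rw [heq, show (fun y : ℍ[ℝ] => (s - star (id y)) * (Inv.inv ∘ Qc s) y)
      = (fun x => s - star (id x)) * Inv.inv ∘ Qc s from rfl, hf.fderiv]
  have hstarL : ∀ x : ℍ[ℝ], (starL' ℝ : ℍ[ℝ] ≃L[ℝ] ℍ[ℝ]) x = star x := fun _ => rfl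
  simp only [ContinuousLinearMap.add_apply, ContinuousLinearMap.coe_comp',
    Function.comp_apply, ContinuousLinearMap.smul_apply, ContinuousLinearMap.smulRight_apply,
    ContinuousLinearMap.neg_apply, ContinuousLinearMap.coe_id', id_eq,
    ContinuousLinearMap.zero_apply, ContinuousLinearMap.mulLeftRight_apply,
    ContinuousLinearMap.coe_sub', Pi.sub_apply, ContinuousLinearMap.one_apply]
  simp only [ContinuousLinearEquiv.coe_coe, hstarL, hv, smul_eq_mul, op_smul_eq_mul, smul_zero, mul_zero, zero_mul,
    add_neg_cancel, zero_add, mul_neg, neg_neg, neg_add_rev, neg_zero, add_zero, zero_sub, neg_mul]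
  have hvr' : v * star q - q * v = ((2*r : ℝ) : ℍ[ℝ]) := hvr
  have h2 : -(q * v) + v * star q = ((2*r : ℝ) : ℍ[ℝ]) := by rw [← hvr']; abel
  rw [h2]
  have h3 : (Qc s q)⁻¹ * ((2*r:ℝ):ℍ[ℝ]) * (Qc s q)⁻¹ = (2*r) • ((Qc s q)⁻¹ * (Qc s q)⁻¹) := by
    rw [← Quaternion.coe_commutes, Quaternion.coe_mul_eq_smul, smul_mul_assoc]
  rw [h3]
  have h4 : FL s q = (-4:ℝ) • ((s - star q) * ((Qc s q)⁻¹ * (Qc s q)⁻¹)) := by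
    rw [FL, sq, show (-4:ℍ[ℝ]) = ((-4:ℝ):ℍ[ℝ]) from by norm_cast,
      Quaternion.coe_mul_eq_smul, smul_mul_assoc]
  rw [h4, smul_smul, mul_smul_comm]
  have h5 : (r/2) * (-4) = -(2*r) := by ring
  rw [h5, neg_smul]
  exact add_comm _ _

@[simp] lemma e1_re : e1.re = 0 := rfl
@[simp] lemma e1_imI : e1.imI = 1 := rfl
@[simp] lemma e1_imJ : e1.imJ = 0 := rfl
@[simp] lemma e1_imK : e1.imK = 0 := rfl
@[simp] lemma e2_re : e2.re = 0 := rfl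
@[simp] lemma e2_imI : e2.imI = 0 := rfl
@[simp] lemma e2_imJ : e2.imJ = 1 := rfl
@[simp] lemma e2_imK : e2.imK = 0 := rfl
@[simp] lemma e3_re : e3.re = 0 := rfl
@[simp] lemma e3_imI : e3.imI = 0 := rfl
@[simp] lemma e3_imJ : e3.imJ = 0 := rfl
@[simp] lemma e3_imK : e3.imK = 1 := rfl

/-- for `s ∉ [q]` and `i = 1, 2, 3`,
`∂_{q_i} S_L^{-1}(s,q) = e_i Q_{c,s}(q)⁻¹ + (q_i/2) F_L(s,q)`. -/
theorem dqi_SL (s q : ℍ[ℝ]) (h : ¬ inSphereOf s q) :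
    (fderiv ℝ (fun p => SL s p) q e1 = e1 * (Qc s q)⁻¹ + (q.imI / 2) • FL s q) ∧
    (fderiv ℝ (fun p => SL s p) q e2 = e2 * (Qc s q)⁻¹ + (q.imJ / 2) • FL s q) ∧
    (fderiv ℝ (fun p => SL s p) q e3 = e3 * (Qc s q)⁻¹ + (q.imK / 2) • FL s q) := by
  have hQ := Qc_ne_zero h
  refine ⟨key s q hQ e1 (by ext <;> simp) q.imI ?_,
          key s q hQ e2 (by ext <;> simp) q.imJ ?_,
          key s q hQ e3 (by ext <;> simp) q.imK ?_⟩ <;>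
    · ext <;> simp <;> ring

end
end

section
/- For every integer n ≥ 1 and every q ∈ ℍ, the conjugate Fueter operator applied to qⁿ satisfies: D̄(qⁿ) = −Δ(q^{n+1}) + q₀ Δ(qⁿ), where q₀ = Re(q) and Δ is the Laplacian in the four real variables q₀, q₁, q₂, q₃. -/
noncomputable section

open scoped Quaternion
open Finset

/-! ### algebraic sandwich identities -/

lemma sandwich (x : ℍ[ℝ]) : x + e1*x*e1 + e2*x*e2 + e3*x*e3 = -2 * star x := by
  rw [show ((-2 : ℍ[ℝ]) * star x) = -(star x + star x) by rw [← two_mul, ← neg_mul]]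
  ext <;> simp [Quaternion.re_mul, Quaternion.imI_mul, Quaternion.imJ_mul,
    Quaternion.imK_mul] <;> simp [e1, e2, e3]

lemma comm_qs (q : ℍ[ℝ]) : Commute q (star q) := by
  unfold Commute SemiconjBy
  rw [Quaternion.self_mul_star, Quaternion.star_mul_self]

lemma spow_qpow (q : ℍ[ℝ]) (a b : ℕ) :
    (star q) ^ a * q ^ b = q ^ b * (star q) ^ a := ((comm_qs q).symm.pow_pow a b).eq

lemma mono (q : ℍ[ℝ]) {i a b c : ℕ} (h : i + b = c) :
    q^i * ((star q)^a * q^b) = q^c * (star q)^a := by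
  rw [spow_qpow, ← mul_assoc, ← pow_add, h]

lemma key1 (u x y : ℍ[ℝ]) :
    u*((1:ℍ[ℝ])*(x*(1*y))) + u*(e1*(x*(e1*y))) + u*(e2*(x*(e2*y))) + u*(e3*(x*(e3*y)))
      = -2 * (u * (star x * y)) := by
  have h := sandwich x
  calc u*((1:ℍ[ℝ])*(x*(1*y))) + u*(e1*(x*(e1*y))) + u*(e2*(x*(e2*y))) + u*(e3*(x*(e3*y)))
      = u * ((x + e1*x*e1 + e2*x*e2 + e3*x*e3) * y) := by noncomm_ring
    _ = -2 * (u * (star x * y)) := by rw [h]; noncomm_ring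

lemma key2 (x y u : ℍ[ℝ]) :
    (x*((1:ℍ[ℝ])*y))*(1*u) + (x*(e1*y))*(e1*u) + (x*(e2*y))*(e2*u) + (x*(e3*y))*(e3*u)
      = -2 * (x * (star y * u)) := by
  have h := sandwich y
  calc (x*((1:ℍ[ℝ])*y))*(1*u) + (x*(e1*y))*(e1*u) + (x*(e2*y))*(e2*u) + (x*(e3*y))*(e3*u)
      = x * ((y + e1*y*e1 + e2*y*e2 + e3*y*e3) * u) := by noncomm_ring
    _ = -2 * (x * (star y * u)) := by rw [h]; noncomm_ring

lemma key3 (x y : ℍ[ℝ]) :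
    x*((1:ℍ[ℝ])*y) - e1*(x*(e1*y)) - e2*(x*(e2*y)) - e3*(x*(e3*y))
      = 2*(x*y) + 2*(star x * y) := by
  have h : e1*x*e1 + e2*x*e2 + e3*x*e3 = -2*star x - x := by
    rw [← sandwich x]; abel
  calc x*((1:ℍ[ℝ])*y) - e1*(x*(e1*y)) - e2*(x*(e2*y)) - e3*(x*(e3*y))
      = x*y - (e1*x*e1 + e2*x*e2 + e3*x*e3) * y := by noncomm_ring
    _ = x*y - (-2*star x - x) * y := by rw [h]
    _ = 2*(x*y) + 2*(star x * y) := by noncomm_ring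

/-! ### derivatives of powers -/

def dpow (n : ℕ) (q : ℍ[ℝ]) : ℍ[ℝ] →L[ℝ] ℍ[ℝ] :=
  ∑ i ∈ range n,
    (ContinuousLinearMap.mul ℝ ℍ[ℝ] (q ^ i)).comp
      ((ContinuousLinearMap.mul ℝ ℍ[ℝ]).flip (q ^ (n - 1 - i)))

lemma dpow_apply (n : ℕ) (q v : ℍ[ℝ]) :
    dpow n q v = ∑ i ∈ range n, q ^ i * (v * q ^ (n - 1 - i)) := by
  simp [dpow, ContinuousLinearMap.sum_apply]

lemma hasFDerivAt_pow_q (n : ℕ) (q : ℍ[ℝ]) :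
    HasFDerivAt (fun p : ℍ[ℝ] => p ^ n) (dpow n q) q := by
  induction n with
  | zero =>
    simp only [pow_zero, dpow, range_zero, sum_empty]
    exact hasFDerivAt_const 1 q
  | succ n ih =>
    have h := (hasFDerivAt_id q).mul' ih
    simp only [id_eq] at h
    have this1 : (fun p : ℍ[ℝ] => p * p ^ n) = fun p : ℍ[ℝ] => p ^ (n + 1) := by
      funext p; rw [← pow_succ']
    rw [show (id * fun p : ℍ[ℝ] => p ^ n) = fun p : ℍ[ℝ] => p ^ (n + 1) from this1] at h
    have heq : (q • dpow n q + (ContinuousLinearMap.id ℝ ℍ[ℝ]).smulRight (q ^ n)) =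
        dpow (n + 1) q := by
      refine ContinuousLinearMap.ext fun v => ?_
      simp only [dpow_apply, ContinuousLinearMap.add_apply, ContinuousLinearMap.smul_apply,
        ContinuousLinearMap.smulRight_apply, ContinuousLinearMap.id_apply, smul_eq_mul,
        Finset.mul_sum]
      rw [Finset.sum_range_succ']
      simp only [pow_zero, one_mul, Nat.sub_zero, Nat.add_sub_cancel]
      congr 1
      refine Finset.sum_congr rfl fun i hi => ?_
      rw [mem_range] at hi
      have h2 : n - (i + 1) = n - 1 - i := by omega
      rw [h2, pow_succ', mul_assoc]
    have e : (ContinuousLinearMap.id ℝ ℍ[ℝ]).smulRight (q ^ n)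
        = MulOpposite.op (q ^ n) • ContinuousLinearMap.id ℝ ℍ[ℝ] :=
      ContinuousLinearMap.ext fun v => by simp
    rw [← heq, e]
    exact h

lemma fderiv_pow_q (n : ℕ) (q : ℍ[ℝ]) :
    fderiv ℝ (fun p : ℍ[ℝ] => p ^ n) q = dpow n q := (hasFDerivAt_pow_q n q).fderiv

lemma hasFDerivAt_dpow (n : ℕ) (q v : ℍ[ℝ]) :
    HasFDerivAt (fun p => dpow n p v)
      (∑ i ∈ range n, (q ^ i • (v • dpow (n - 1 - i) q)
        + (dpow i q).smulRight (v * q ^ (n - 1 - i)))) q := by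
  have hfun : (fun p : ℍ[ℝ] => dpow n p v)
      = fun p => ∑ i ∈ range n, p ^ i * (v * p ^ (n - 1 - i)) := by
    funext p; exact dpow_apply n p v
  rw [hfun]
  refine HasFDerivAt.fun_sum fun i _ => ?_
  have e : (dpow i q).smulRight (v * q ^ (n - 1 - i))
      = MulOpposite.op (v * q ^ (n - 1 - i)) • dpow i q :=
    ContinuousLinearMap.ext fun w => by simp
  rw [e]
  exact (hasFDerivAt_pow_q i q).mul' ((hasFDerivAt_pow_q (n - 1 - i) q).const_mul v)

lemma fderiv_dpow_apply (n : ℕ) (q v w : ℍ[ℝ]) :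
    fderiv ℝ (fun p => dpow n p v) q w
      = ∑ i ∈ range n,
          (q ^ i * (v * dpow (n - 1 - i) q w) + dpow i q w * (v * q ^ (n - 1 - i))) := by
  rw [(hasFDerivAt_dpow n q v).fderiv]
  simp [ContinuousLinearMap.sum_apply, smul_eq_mul, mul_assoc]

/-! ### the second-derivative sum for each i -/

lemma second_sum (n i : ℕ) (q : ℍ[ℝ]) :
    q^i * ((1:ℍ[ℝ]) * dpow (n-1-i) q 1) + dpow i q 1 * (1 * q^(n-1-i))
  + (q^i * (e1 * dpow (n-1-i) q e1) + dpow i q e1 * (e1 * q^(n-1-i)))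
  + (q^i * (e2 * dpow (n-1-i) q e2) + dpow i q e2 * (e2 * q^(n-1-i)))
  + (q^i * (e3 * dpow (n-1-i) q e3) + dpow i q e3 * (e3 * q^(n-1-i)))
  = (∑ a ∈ range (n-1-i), -2 * (q^i * ((star q)^a * q^(n-1-i-1-a))))
  + (∑ a ∈ range i, -2 * (q^a * ((star q)^(i-1-a) * q^(n-1-i)))) := by
  simp only [dpow_apply, Finset.mul_sum, Finset.sum_mul]
  rw [show ∀ (a1 b1 a2 b2 a3 b3 a4 b4 : ℍ[ℝ]),
      a1+b1+(a2+b2)+(a3+b3)+(a4+b4) = (a1+a2+a3+a4)+(b1+b2+b3+b4) by intros; abel]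
  simp only [← Finset.sum_add_distrib]
  congr 1
  · refine Finset.sum_congr rfl fun a _ => ?_
    rw [← star_pow]
    exact key1 _ _ _
  · refine Finset.sum_congr rfl fun a _ => ?_
    rw [← star_pow]
    exact key2 _ _ _

/-! ### counting lemma -/

lemma Tsum (g : ℕ → ℍ[ℝ]) (n : ℕ) :
    ∑ i ∈ range (n+1), ∑ a ∈ range i, g a = ∑ a ∈ range n, (n-a) • g a := by
  induction n with
  | zero => simp
  | succ n ih =>
    rw [Finset.sum_range_succ (fun i => ∑ a ∈ range i, g a) (n+1), ih,
      Finset.sum_range_succ (fun a => (n+1-a) • g a) n,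
      Finset.sum_range_succ g n]
    have h : ∑ a ∈ range n, (n+1-a) • g a = ∑ a ∈ range n, ((n-a) • g a + g a) :=
      Finset.sum_congr rfl fun a ha => by
        rw [mem_range] at ha
        rw [show n+1-a = (n-a)+1 by omega, succ_nsmul]
    rw [h, Finset.sum_add_distrib]
    simp
    abel

/-! ### Laplacian of powers -/

lemma lap_pow (n : ℕ) (q : ℍ[ℝ]) :
    Lap (fun p => p ^ n) q
      = ∑ a ∈ range (n-1), (n-1-a) • ((-4 : ℍ[ℝ]) * (q^(n-2-a) * (star q)^a)) := by
  have hf : ∀ e : ℍ[ℝ], (fun p => fderiv ℝ (fun x : ℍ[ℝ] => x ^ n) p e)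
      = fun p => dpow n p e := fun e => funext fun p => by rw [fderiv_pow_q]
  rw [Lap, hf 1, hf e1, hf e2, hf e3, fderiv_dpow_apply, fderiv_dpow_apply,
    fderiv_dpow_apply, fderiv_dpow_apply, ← Finset.sum_add_distrib,
    ← Finset.sum_add_distrib, ← Finset.sum_add_distrib]
  have step1 : ∀ i ∈ range n,
      q^i * ((1:ℍ[ℝ]) * dpow (n-1-i) q 1) + dpow i q 1 * (1 * q^(n-1-i))
    + (q^i * (e1 * dpow (n-1-i) q e1) + dpow i q e1 * (e1 * q^(n-1-i)))
    + (q^i * (e2 * dpow (n-1-i) q e2) + dpow i q e2 * (e2 * q^(n-1-i)))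
    + (q^i * (e3 * dpow (n-1-i) q e3) + dpow i q e3 * (e3 * q^(n-1-i)))
    = (∑ a ∈ range (n-1-i), -2 * (q^(n-2-a) * (star q)^a))
      + ∑ a ∈ range i, -2 * (q^(n-2-a) * (star q)^a) := by
    intro i hi
    rw [mem_range] at hi
    rw [second_sum n i q]
    congr 1
    · refine Finset.sum_congr rfl fun a ha => ?_
      rw [mem_range] at ha
      rw [mono q (show i+(n-1-i-1-a) = n-2-a by omega)]
    · rw [show (∑ a ∈ range i, -2 * (q^a * ((star q)^(i-1-a) * q^(n-1-i))))
          = ∑ a ∈ range i, -2 * (q^(n-2-(i-1-a)) * (star q)^(i-1-a)) from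
        Finset.sum_congr rfl fun a ha => by
          rw [mem_range] at ha
          rw [mono q (show a+(n-1-i) = n-2-(i-1-a) by omega)]]
      exact Finset.sum_range_reflect (fun a => -2 * (q^(n-2-a) * (star q)^a)) i
  rw [Finset.sum_congr rfl step1, Finset.sum_add_distrib,
    Finset.sum_range_reflect (fun i => ∑ a ∈ range i, -2 * (q^(n-2-a) * (star q)^a)) n]
  cases n with
  | zero => simp
  | succ k =>
    rw [Tsum (fun a => -2 * (q^(k+1-2-a) * (star q)^a)) k, ← Finset.sum_add_distrib]
    simp only [Nat.add_sub_cancel]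
    refine Finset.sum_congr rfl fun a ha => ?_
    rw [← smul_add, show (-2:ℍ[ℝ]) * (q^(k+1-2-a) * (star q)^a)
        + -2 * (q^(k+1-2-a) * (star q)^a) = -4 * (q^(k+1-2-a) * (star q)^a) by noncomm_ring]

/-! ### Dbar of powers -/

lemma dbar_pow (n : ℕ) (q : ℍ[ℝ]) :
    Dbar (fun p => p ^ n) q
      = ∑ i ∈ range n, (2*(q^(n-1)) + 2*(q^(n-1-i) * (star q)^i)) := by
  rw [Dbar, fderiv_pow_q]
  simp only [dpow_apply, Finset.mul_sum]
  rw [← Finset.sum_sub_distrib, ← Finset.sum_sub_distrib, ← Finset.sum_sub_distrib]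
  refine Finset.sum_congr rfl fun i hi => ?_
  rw [mem_range] at hi
  rw [key3, ← pow_add, show i+(n-1-i) = n-1 by omega, star_pow, spow_qpow]

/-! ### final sum identity -/

lemma coeff_collapse (x : ℍ[ℝ]) (k : ℕ) :
    (k+1)•((4:ℍ[ℝ])*x) + k•((-2:ℍ[ℝ])*x) + (k+1)•((-2:ℍ[ℝ])*x) = 2*x := by
  calc (k+1)•((4:ℍ[ℝ])*x) + k•((-2:ℍ[ℝ])*x) + (k+1)•((-2:ℍ[ℝ])*x)
      = (k•((4:ℍ[ℝ])*x + (-2:ℍ[ℝ])*x + (-2:ℍ[ℝ])*x)) + ((4:ℍ[ℝ])*x + (-2:ℍ[ℝ])*x) := by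
        rw [succ_nsmul, succ_nsmul, smul_add, smul_add]; abel
    _ = 2*x := by
        rw [show (4:ℍ[ℝ])*x + -2*x + -2*x = 0 by noncomm_ring,
          show (4:ℍ[ℝ])*x + -2*x = 2*x by noncomm_ring, smul_zero, zero_add]

lemma final_sum (m : ℕ → ℍ[ℝ]) (n : ℕ) (hn : 1 ≤ n) :
    ∑ a ∈ range n, (n-a) • ((4:ℍ[ℝ]) * m a)
      + ∑ a ∈ range (n-1), (n-1-a) • ((-2:ℍ[ℝ]) * (m a + m (a+1)))
    = ∑ i ∈ range n, (2 * m 0 + 2 * m i) := by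
  obtain ⟨k, rfl⟩ : ∃ k, n = k + 1 := ⟨n - 1, by omega⟩
  simp only [Nat.add_sub_cancel]
  have h1 : ∀ a, ((-2:ℍ[ℝ])*(m a + m (a+1))) = (-2)*m a + (-2)*m (a+1) := fun a => by
    noncomm_ring
  simp only [h1, smul_add, Finset.sum_add_distrib]
  have h2 : ∑ a ∈ range k, (k-a) • ((-2:ℍ[ℝ])*m (a+1))
      = ∑ a ∈ range (k+1), (k+1-a) • ((-2:ℍ[ℝ])*m a) - (k+1) • ((-2:ℍ[ℝ])*m 0) := by
    rw [Finset.sum_range_succ' (fun a => (k+1-a) • ((-2:ℍ[ℝ])*m a)) k]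
    simp only [Nat.succ_sub_succ, Nat.sub_zero]
    abel
  have h3 : ∑ a ∈ range k, (k-a) • ((-2:ℍ[ℝ])*m a)
      = ∑ a ∈ range (k+1), (k-a) • ((-2:ℍ[ℝ])*m a) := by
    rw [Finset.sum_range_succ]
    simp
  rw [h2, h3]
  have h4 : ∑ a ∈ range (k+1), (k+1-a) • ((4:ℍ[ℝ]) * m a)
      + (∑ a ∈ range (k+1), (k-a) • ((-2:ℍ[ℝ])*m a)
        + (∑ a ∈ range (k+1), (k+1-a) • ((-2:ℍ[ℝ])*m a) - (k+1) • ((-2:ℍ[ℝ])*m 0)))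
      = (∑ a ∈ range (k+1), ((k+1-a) • ((4:ℍ[ℝ]) * m a) + (k-a) • ((-2:ℍ[ℝ])*m a)
          + (k+1-a) • ((-2:ℍ[ℝ])*m a))) - (k+1) • ((-2:ℍ[ℝ])*m 0) := by
    rw [Finset.sum_add_distrib, Finset.sum_add_distrib]; abel
  rw [h4]
  have h5 : ∀ a ∈ range (k+1), (k+1-a) • ((4:ℍ[ℝ]) * m a) + (k-a) • ((-2:ℍ[ℝ])*m a)
      + (k+1-a) • ((-2:ℍ[ℝ])*m a) = 2 * m a := fun a ha => by
    rw [mem_range] at ha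
    rw [show k+1-a = (k-a)+1 by omega]
    exact coeff_collapse (m a) (k-a)
  rw [Finset.sum_congr rfl h5, Finset.sum_const, card_range]
  rw [show ((-2:ℍ[ℝ])*m 0) = -(2*m 0) by noncomm_ring, smul_neg]
  abel


/-- for `n ≥ 1`, `D̄(qⁿ) = −Δ(q^{n+1}) + q₀ Δ(qⁿ)`. -/
theorem Dbar_pow_eq_lap (n : ℕ) (hn : 1 ≤ n) (q : ℍ[ℝ]) :
    Dbar (fun p => p ^ n) q =
      -Lap (fun p => p ^ (n + 1)) q + q.re • Lap (fun p => p ^ n) q := by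

  rw [dbar_pow, lap_pow, lap_pow]
  simp only [Nat.add_sub_cancel, show ∀ a : ℕ, n+1-2-a = n-1-a from fun a => by omega]
  have hneg : -(∑ a ∈ range n, (n-a) • ((-4:ℍ[ℝ])*(q^(n-1-a)*(star q)^a)))
      = ∑ a ∈ range n, (n-a) • ((4:ℍ[ℝ])*(q^(n-1-a)*(star q)^a)) := by
    rw [← Finset.sum_neg_distrib]
    refine Finset.sum_congr rfl fun a _ => ?_
    rw [show (-4:ℍ[ℝ])*(q^(n-1-a)*(star q)^a) = -((4:ℍ[ℝ])*(q^(n-1-a)*(star q)^a)) by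
      noncomm_ring, smul_neg, neg_neg]
  have hre : q.re • ∑ a ∈ range (n-1), (n-1-a) • ((-4:ℍ[ℝ])*(q^(n-2-a)*(star q)^a))
      = ∑ a ∈ range (n-1), (n-1-a) •
          ((-2:ℍ[ℝ])*((q^(n-1-a)*(star q)^a) + q^(n-1-(a+1))*(star q)^(a+1))) := by
    rw [Finset.smul_sum]
    refine Finset.sum_congr rfl fun a ha => ?_
    rw [mem_range] at ha
    rw [smul_comm]
    congr 1
    rw [← Quaternion.coe_mul_eq_smul]
    have hq : q * (q^(n-2-a) * (star q)^a) = q^(n-1-a) * (star q)^a := by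
      rw [← mul_assoc, ← pow_succ', show n-2-a+1 = n-1-a by omega]
    have hs : star q * (q^(n-2-a) * (star q)^a) = q^(n-1-(a+1)) * (star q)^(a+1) := by
      rw [show n-1-(a+1) = n-2-a by omega, ← mul_assoc,
        show star q * q^(n-2-a) = q^(n-2-a) * star q from by
          have := spow_qpow q 1 (n-2-a); simpa using this,
        mul_assoc, ← pow_succ']
    calc (↑q.re : ℍ[ℝ]) * ((-4:ℍ[ℝ])*(q^(n-2-a)*(star q)^a))
        = -2*((2*(q.re:ℍ[ℝ])) * (q^(n-2-a)*(star q)^a)) := by noncomm_ring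
      _ = -2*((q + star q) * (q^(n-2-a)*(star q)^a)) := by rw [← Quaternion.self_add_star]
      _ = -2*(q * (q^(n-2-a)*(star q)^a) + star q * (q^(n-2-a)*(star q)^a)) := by noncomm_ring
      _ = -2*(q^(n-1-a)*(star q)^a + q^(n-1-(a+1))*(star q)^(a+1)) := by rw [hq, hs]
  rw [hneg, hre, final_sum (fun a => q^(n-1-a)*(star q)^a) n hn]
  refine Finset.sum_congr rfl fun i _ => ?_
  simp

end
end
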